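/- Suppose γ lies on a sphere: there exist c ∈ ℝ³ and R > 0 with ‖γ(s) − c‖ = R for all s ∈ I, and fix 0 ∈ I. Then there exists a constant θ₀ such that 1/κ(s) = R·cos(∫₀ˢ τ(u)du + θ₀) for all s ∈ I. -/

import Mathlib

open scoped RealInnerProductSpace
open Matrix

noncomputable def cross3 (x y : EuclideanSpace ℝ (Fin 3)) : EuclideanSpace ℝ (Fin 3) :=
  WithLp.toLp 2 ![x 1 * y 2 - x 2 * y 1, x 2 * y 0 - x 0 * y 2, x 0 * y 1 - x 1 * y 0]

lemma inner_coord (u w : EuclideanSpace ℝ (Fin 3)) :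
    ⟪u, w⟫ = u 0 * w 0 + u 1 * w 1 + u 2 * w 2 := by
  simp [PiLp.inner_apply, Fin.sum_univ_three, RCLike.inner_apply]
  ring

lemma parseval3 (x y z v : EuclideanSpace ℝ (Fin 3))
    (hx : ‖x‖ = 1) (hy : ‖y‖ = 1) (hz : ‖z‖ = 1)
    (hxy : ⟪x, y⟫ = 0) (hxz : ⟪x, z⟫ = 0) (hyz : ⟪y, z⟫ = 0) :
    ⟪v, x⟫ ^ 2 + ⟪v, y⟫ ^ 2 + ⟪v, z⟫ ^ 2 = ‖v‖ ^ 2 := by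
  have hx2 : x 0 * x 0 + x 1 * x 1 + x 2 * x 2 = 1 := by
    have := real_inner_self_eq_norm_sq x; rw [inner_coord, hx] at this; linarith [this]
  have hy2 : y 0 * y 0 + y 1 * y 1 + y 2 * y 2 = 1 := by
    have := real_inner_self_eq_norm_sq y; rw [inner_coord, hy] at this; linarith [this]
  have hz2 : z 0 * z 0 + z 1 * z 1 + z 2 * z 2 = 1 := by
    have := real_inner_self_eq_norm_sq z; rw [inner_coord, hz] at this; linarith [this]
  rw [inner_coord] at hxy hxz hyz
  set M : Matrix (Fin 3) (Fin 3) ℝ :=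
    Matrix.of ![![x 0, x 1, x 2], ![y 0, y 1, y 2], ![z 0, z 1, z 2]] with hM
  have hMMt : M * Mᵀ = 1 := by
    ext i j
    fin_cases i <;> fin_cases j <;>
      simp [hM, Matrix.mul_apply, Matrix.transpose_apply, Matrix.vecHead, Matrix.vecTail,
        Function.comp, Fin.sum_univ_three, Matrix.one_apply] <;>
      linarith [hx2, hy2, hz2, hxy, hxz, hyz]
  have hMtM : Mᵀ * M = 1 := mul_eq_one_comm.mp hMMt
  have e : ∀ i j : Fin 3, (Mᵀ * M) i j = (1 : Matrix (Fin 3) (Fin 3) ℝ) i j := fun i j => by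
    rw [hMtM]
  have e00 := e 0 0; have e01 := e 0 1; have e02 := e 0 2
  have e11 := e 1 1; have e12 := e 1 2; have e22 := e 2 2
  simp [hM, Matrix.mul_apply, Matrix.transpose_apply, Matrix.vecHead, Matrix.vecTail,
    Function.comp, Fin.sum_univ_three, Matrix.one_apply] at e00 e01 e02 e11 e12 e22
  rw [inner_coord, inner_coord, inner_coord, ← real_inner_self_eq_norm_sq, inner_coord]
  linear_combination (v 0)^2 * e00 + (v 1)^2 * e11 + (v 2)^2 * e22 +
    2*(v 0)*(v 1)*e01 + 2*(v 0)*(v 2)*e02 + 2*(v 1)*(v 2)*e12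

lemma const_on_Ioo {a b : ℝ} {F : ℝ → ℝ} (h0 : (0:ℝ) ∈ Set.Ioo a b)
    (hF : ∀ s ∈ Set.Ioo a b, HasDerivAt F 0 s) : ∀ s ∈ Set.Ioo a b, F s = F 0 := by
  intro s hs
  by_contra hne
  have hsub : Set.uIcc 0 s ⊆ Set.Ioo a b := Set.ordConnected_Ioo.uIcc_subset h0 hs
  have hcont : ContinuousOn F (Set.uIcc 0 s) := fun u hu =>
    ((hF u (hsub hu)).continuousAt).continuousWithinAt
  rcases lt_trichotomy s 0 with h | h | h
  · have hIoo : Set.Ioo s 0 ⊆ Set.Ioo a b := by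
      intro u hu; exact hsub (by rw [Set.uIcc_of_ge h.le]; exact Set.Ioo_subset_Icc_self hu)
    obtain ⟨c, hc, hceq⟩ := exists_hasDerivAt_eq_slope F (fun _ => (0:ℝ)) h
      (by rwa [Set.uIcc_of_ge h.le] at hcont) (fun u hu => hF u (hIoo hu))
    rw [eq_comm, div_eq_iff (by linarith)] at hceq
    simp at hceq; exact hne (by linarith)
  · exact hne (by rw [h])
  · have hIoo : Set.Ioo 0 s ⊆ Set.Ioo a b := by
      intro u hu; exact hsub (by rw [Set.uIcc_of_le h.le]; exact Set.Ioo_subset_Icc_self hu)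
    obtain ⟨c, hc, hceq⟩ := exists_hasDerivAt_eq_slope F (fun _ => (0:ℝ)) h
      (by rwa [Set.uIcc_of_le h.le] at hcont) (fun u hu => hF u (hIoo hu))
    rw [eq_comm, div_eq_iff (by linarith)] at hceq
    simp at hceq; exact hne (by linarith)


/-- If γ lies on a sphere of center c and radius R > 0, then there is a
constant θ₀ with 1/κ(s) = R·cos(∫₀ˢ τ + θ₀) for all s ∈ I. -/
theorem stmt_13 (a b : ℝ) (γ T N B : ℝ → EuclideanSpace ℝ (Fin 3)) (κ τ : ℝ → ℝ)
    (hγT : ∀ s ∈ Set.Ioo a b, HasDerivAt γ (T s) s)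
    (hT1 : ∀ s ∈ Set.Ioo a b, ‖T s‖ = 1)
    (hN1 : ∀ s ∈ Set.Ioo a b, ‖N s‖ = 1)
    (hB1 : ∀ s ∈ Set.Ioo a b, ‖B s‖ = 1)
    (hTN : ∀ s ∈ Set.Ioo a b, ⟪T s, N s⟫ = 0)
    (hTB : ∀ s ∈ Set.Ioo a b, ⟪T s, B s⟫ = 0)
    (hNB : ∀ s ∈ Set.Ioo a b, ⟪N s, B s⟫ = 0)
    (horient : ∀ s ∈ Set.Ioo a b, B s = cross3 (T s) (N s))
    (hκpos : ∀ s ∈ Set.Ioo a b, 0 < κ s)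
    (hTder : ∀ s ∈ Set.Ioo a b, HasDerivAt T (κ s • N s) s)
    (hNder : ∀ s ∈ Set.Ioo a b, HasDerivAt N ((-κ s) • T s + τ s • B s) s)
    (hBder : ∀ s ∈ Set.Ioo a b, HasDerivAt B ((-τ s) • N s) s)
    (h0 : (0:ℝ) ∈ Set.Ioo a b) (hτcont : ContinuousOn τ (Set.Ioo a b))
    (c : EuclideanSpace ℝ (Fin 3)) (R : ℝ) (hR : 0 < R)
    (hsph : ∀ s ∈ Set.Ioo a b, ‖γ s - c‖ = R) :
    ∃ θ₀ : ℝ, ∀ s ∈ Set.Ioo a b,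
      1 / κ s = R * Real.cos ((∫ t in (0:ℝ)..s, τ t) + θ₀) := by
  have hIopen : IsOpen (Set.Ioo a b) := isOpen_Ioo
  set p : ℝ → EuclideanSpace ℝ (Fin 3) := fun s => γ s - c with hp
  have hpd : ∀ s ∈ Set.Ioo a b, HasDerivAt p (T s) s := fun s hs => (hγT s hs).sub_const c
  -- the tangential component vanishes
  have hf0 : ∀ s ∈ Set.Ioo a b, ⟪p s, T s⟫ = 0 := by
    intro s hs
    have hd1 : HasDerivAt (fun u => ⟪p u, p u⟫) (⟪p s, T s⟫ + ⟪T s, p s⟫) s :=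
      HasDerivAt.inner ℝ (hpd s hs) (hpd s hs)
    have hd2 : HasDerivAt (fun u => ⟪p u, p u⟫) 0 s := by
      refine (hasDerivAt_const s ((R:ℝ)^2)).congr_of_eventuallyEq ?_
      filter_upwards [hIopen.mem_nhds hs] with u hu
      rw [real_inner_self_eq_norm_sq]
      rw [show p u = γ u - c from rfl, hsph u hu]
    have huniq := hd1.unique hd2
    have hc : ⟪T s, p s⟫ = ⟪p s, T s⟫ := real_inner_comm _ _
    linarith [huniq, hc]
  set g : ℝ → ℝ := fun u => ⟪p u, N u⟫ with hgdef
  set h : ℝ → ℝ := fun u => ⟪p u, B u⟫ with hhdef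
  -- g = -1/κ
  have hgval : ∀ s ∈ Set.Ioo a b, g s = -(1 / κ s) := by
    intro s hs
    have hd1 : HasDerivAt (fun u => ⟪p u, T u⟫) (⟪p s, κ s • N s⟫ + ⟪T s, T s⟫) s :=
      HasDerivAt.inner ℝ (hpd s hs) (hTder s hs)
    have hd2 : HasDerivAt (fun u => ⟪p u, T u⟫) 0 s := by
      refine (hasDerivAt_const s (0:ℝ)).congr_of_eventuallyEq ?_
      filter_upwards [hIopen.mem_nhds hs] with u hu using hf0 u hu
    have huniq := hd1.unique hd2
    rw [real_inner_smul_right, real_inner_self_eq_norm_sq, hT1 s hs] at huniq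
    norm_num at huniq
    have hκ := (hκpos s hs).ne'
    have hgs : g s = ⟪p s, N s⟫ := rfl
    rw [hgs]
    field_simp
    linarith [huniq]
  have hgd : ∀ s ∈ Set.Ioo a b, HasDerivAt g (τ s * h s) s := by
    intro s hs
    have hd1 : HasDerivAt g (⟪p s, (-κ s) • T s + τ s • B s⟫ + ⟪T s, N s⟫) s :=
      HasDerivAt.inner ℝ (hpd s hs) (hNder s hs)
    convert hd1 using 1
    rw [inner_add_right, real_inner_smul_right, real_inner_smul_right, hf0 s hs, hTN s hs]
    show τ s * h s = _
    rw [show h s = ⟪p s, B s⟫ from rfl]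
    ring
  have hhd : ∀ s ∈ Set.Ioo a b, HasDerivAt h (-(τ s * g s)) s := by
    intro s hs
    have hd1 : HasDerivAt h (⟪p s, (-τ s) • N s⟫ + ⟪T s, B s⟫) s :=
      HasDerivAt.inner ℝ (hpd s hs) (hBder s hs)
    convert hd1 using 1
    rw [real_inner_smul_right, hTB s hs]
    show -(τ s * g s) = _
    rw [show g s = ⟪p s, N s⟫ from rfl]
    ring
  set Θ : ℝ → ℝ := fun s => ∫ t in (0:ℝ)..s, τ t with hΘdef
  have hΘd : ∀ s ∈ Set.Ioo a b, HasDerivAt Θ (τ s) s := by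
    intro s hs
    have hsub : Set.uIcc 0 s ⊆ Set.Ioo a b := Set.ordConnected_Ioo.uIcc_subset h0 hs
    exact intervalIntegral.integral_hasDerivAt_right
      ((hτcont.mono hsub).intervalIntegrable)
      (hτcont.stronglyMeasurableAtFilter hIopen s hs)
      (hτcont.continuousAt (hIopen.mem_nhds hs))
  set F : ℝ → ℝ := fun u => g u * Real.cos (Θ u) - h u * Real.sin (Θ u) with hFdef
  set G : ℝ → ℝ := fun u => g u * Real.sin (Θ u) + h u * Real.cos (Θ u) with hGdef
  have hFd : ∀ s ∈ Set.Ioo a b, HasDerivAt F 0 s := by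
    intro s hs
    have hcos : HasDerivAt (fun u => Real.cos (Θ u)) (-Real.sin (Θ s) * τ s) s :=
      (Real.hasDerivAt_cos (Θ s)).comp s (hΘd s hs)
    have hsin : HasDerivAt (fun u => Real.sin (Θ u)) (Real.cos (Θ s) * τ s) s :=
      (Real.hasDerivAt_sin (Θ s)).comp s (hΘd s hs)
    have hd := ((hgd s hs).mul hcos).sub ((hhd s hs).mul hsin)
    refine HasDerivAt.congr_deriv (f := F) hd ?_
    ring
  have hGd : ∀ s ∈ Set.Ioo a b, HasDerivAt G 0 s := by
    intro s hs
    have hcos : HasDerivAt (fun u => Real.cos (Θ u)) (-Real.sin (Θ s) * τ s) s :=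
      (Real.hasDerivAt_cos (Θ s)).comp s (hΘd s hs)
    have hsin : HasDerivAt (fun u => Real.sin (Θ u)) (Real.cos (Θ s) * τ s) s :=
      (Real.hasDerivAt_sin (Θ s)).comp s (hΘd s hs)
    have hd := ((hgd s hs).mul hsin).add ((hhd s hs).mul hcos)
    refine HasDerivAt.congr_deriv (f := G) hd ?_
    ring
  have hFc := const_on_Ioo h0 hFd
  have hGc := const_on_Ioo h0 hGd
  have hΘ0 : Θ 0 = 0 := intervalIntegral.integral_same
  have hF0 : F 0 = g 0 := by rw [hFdef]; simp [hΘ0]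
  have hG0 : G 0 = h 0 := by rw [hGdef]; simp [hΘ0]
  -- Parseval at 0
  have hpar := parseval3 (T 0) (N 0) (B 0) (p 0) (hT1 0 h0) (hN1 0 h0) (hB1 0 h0)
    (hTN 0 h0) (hTB 0 h0) (hNB 0 h0)
  have hgh0 : g 0 ^ 2 + h 0 ^ 2 = R ^ 2 := by
    have h1 := hf0 0 h0
    have h2 : ‖p 0‖ = R := hsph 0 h0
    rw [h1, h2] at hpar
    show ⟪p 0, N 0⟫ ^ 2 + ⟪p 0, B 0⟫ ^ 2 = R ^ 2
    linarith [hpar]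
  set z : ℂ := ⟨-(g 0), h 0⟩ with hzdef
  have hznorm : ‖z‖ = R := by
    rw [Complex.norm_def, hzdef, Complex.normSq_mk]
    rw [show -(g 0) * -(g 0) + h 0 * h 0 = R ^ 2 by nlinarith [hgh0]]
    exact Real.sqrt_sq hR.le
  have hzne : z ≠ 0 := by
    intro hzz
    rw [hzz] at hznorm
    simp at hznorm
    linarith
  have hzre : z.re = -(g 0) := rfl
  have hzim : z.im = h 0 := rfl
  have hcos0 : Real.cos (Complex.arg z) = -(g 0) / R := by
    rw [Complex.cos_arg hzne, hznorm, hzre]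
  have hsin0 : Real.sin (Complex.arg z) = h 0 / R := by
    rw [Complex.sin_arg, hznorm, hzim]
  refine ⟨Complex.arg z, ?_⟩
  intro s hs
  have pyth := Real.sin_sq_add_cos_sq (Θ s)
  have e1' : g s * Real.cos (Θ s) - h s * Real.sin (Θ s) = g 0 := by
    have e1 : F s = g 0 := by rw [hFc s hs, hF0]
    exact e1
  have e2' : g s * Real.sin (Θ s) + h s * Real.cos (Θ s) = h 0 := by
    have e2 : G s = h 0 := by rw [hGc s hs, hG0]
    exact e2
  have hgs : g s = g 0 * Real.cos (Θ s) + h 0 * Real.sin (Θ s) := by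
    linear_combination Real.cos (Θ s) * e1' + Real.sin (Θ s) * e2' - g s * pyth
  show 1 / κ s = R * Real.cos (Θ s + Complex.arg z)
  have hRne : R ≠ 0 := hR.ne'
  calc 1 / κ s = -(g s) := by linarith [hgval s hs]
    _ = -(g 0 * Real.cos (Θ s) + h 0 * Real.sin (Θ s)) := by rw [hgs]
    _ = R * (Real.cos (Θ s) * Real.cos (Complex.arg z) -
          Real.sin (Θ s) * Real.sin (Complex.arg z)) := by
        rw [hcos0, hsin0]; field_simp; ring
    _ = R * Real.cos (Θ s + Complex.arg z) := by rw [Real.cos_add]
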